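/- Uniform convergence of Carlson-type limits: let g_N(n) = Σ_w p_w^{(N)} Tr(ρ_{R|w}^n) for quantum-classical states on a fixed finite-dimensional system R. Each g_N is analytic on the half-plane Re(n) > 1, continuous on Re(n) ≥ 1, and satisfies |g_N(n)| ≤ 1 there. If the measures on states induced by (p^{(N)}, ρ_{·|w}) converge in distribution, then g_N converges uniformly on every compact subset of the half-plane Re(n) ≥ 1 to a function g continuous on Re(n) ≥ 1 and analytic on Re(n) > 1, with |g| ≤ 1. -/

import Mathlib

open Matrix
open scoped ComplexOrder

/-- `Tr(A^z)` for complex `z`, via functional calculus on the support of a Hermitian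
matrix: the sum of `λ^z` over the nonzero eigenvalues `λ`. -/
noncomputable def cTrPow {m : Type*} [Fintype m] [DecidableEq m]
    (A : Matrix m m ℂ) (z : ℂ) : ℂ :=
  if h : A.IsHermitian then
    ∑ i, if h.eigenvalues i = 0 then 0 else ((h.eigenvalues i : ℂ)) ^ z
  else 0

variable {n : Type*} [Fintype n] [DecidableEq n]

lemma herm_pow_eq {A : Matrix n n ℂ} (hA : A.IsHermitian) (k : ℕ) :
    A ^ k = (hA.eigenvectorUnitary : Matrix n n ℂ) *
      (Matrix.diagonal (RCLike.ofReal ∘ hA.eigenvalues)) ^ k *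
      star (hA.eigenvectorUnitary : Matrix n n ℂ) := by
  set U := (hA.eigenvectorUnitary : Matrix n n ℂ) with hUdef
  set D := (Matrix.diagonal (RCLike.ofReal ∘ hA.eigenvalues) : Matrix n n ℂ) with hDdef
  have hU' : star U * U = 1 := (Matrix.mem_unitaryGroup_iff').mp hA.eigenvectorUnitary.2
  have hU2 : U * star U = 1 := (Matrix.mem_unitaryGroup_iff).mp hA.eigenvectorUnitary.2
  have hAeq : A = U * D * star U := hA.spectral_theorem
  induction k with
  | zero => simpa using hU2.symm
  | succ k ih =>
    rw [pow_succ, ih, pow_succ]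
    conv_lhs => rw [hAeq]
    simp only [mul_assoc]
    rw [← mul_assoc (star U) U, hU', one_mul]

lemma herm_trace_pow {A : Matrix n n ℂ} (hA : A.IsHermitian) (k : ℕ) :
    (A ^ k).trace = ∑ i, ((hA.eigenvalues i : ℂ)) ^ k := by
  rw [herm_pow_eq hA k, trace_mul_cycle,
    (Matrix.mem_unitaryGroup_iff').mp hA.eigenvectorUnitary.2, one_mul,
    Matrix.diagonal_pow, trace_diagonal]
  simp [Function.comp]

lemma cTrPow_eq {A : Matrix n n ℂ} (hA : A.PosSemidef) (z : ℂ) :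
    cTrPow A z = ∑ i, (if hA.1.eigenvalues i = 0 then 0
      else Complex.exp ((Real.log (hA.1.eigenvalues i) : ℂ) * z)) := by
  rw [cTrPow, dif_pos hA.1]
  refine Finset.sum_congr rfl fun i _ => ?_
  by_cases h : hA.1.eigenvalues i = 0
  · simp [h]
  · rw [if_neg h, if_neg h, Complex.cpow_def_of_ne_zero (by exact_mod_cast h),
      Complex.ofReal_log (hA.eigenvalues_nonneg i)]

lemma eig_sum_one {A : Matrix n n ℂ} (hA : A.PosSemidef) (ht : A.trace = 1) :
    ∑ i, hA.1.eigenvalues i = 1 := by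
  have h := herm_trace_pow hA.1 1
  rw [pow_one, ht] at h
  have : ((∑ i, hA.1.eigenvalues i : ℝ) : ℂ) = 1 := by push_cast; simpa using h.symm
  exact_mod_cast this

lemma eig_le_one {A : Matrix n n ℂ} (hA : A.PosSemidef) (ht : A.trace = 1) (i : n) :
    hA.1.eigenvalues i ≤ 1 := by
  rw [← eig_sum_one hA ht]
  exact Finset.single_le_sum (fun j _ => hA.eigenvalues_nonneg j) (Finset.mem_univ i)

lemma term_norm_le {A : Matrix n n ℂ} (hA : A.PosSemidef) (ht : A.trace = 1)
    {z : ℂ} (hz : 1 ≤ z.re) (i : n) :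
    ‖(if hA.1.eigenvalues i = 0 then (0:ℂ)
      else Complex.exp ((Real.log (hA.1.eigenvalues i) : ℂ) * z))‖ ≤ hA.1.eigenvalues i := by
  by_cases h : hA.1.eigenvalues i = 0
  · simp [h]
  · have hpos : 0 < hA.1.eigenvalues i := lt_of_le_of_ne (hA.eigenvalues_nonneg i) (Ne.symm h)
    have hL : Real.log (hA.1.eigenvalues i) ≤ 0 :=
      Real.log_nonpos (le_of_lt hpos) (eig_le_one hA ht i)
    rw [if_neg h, Complex.norm_exp]
    have hre : ((Real.log (hA.1.eigenvalues i) : ℂ) * z).re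
        = Real.log (hA.1.eigenvalues i) * z.re := by
      simp [Complex.mul_re]
    rw [hre]
    calc Real.exp (Real.log (hA.1.eigenvalues i) * z.re)
        ≤ Real.exp (Real.log (hA.1.eigenvalues i)) := by
          apply Real.exp_le_exp.2
          calc Real.log (hA.1.eigenvalues i) * z.re
              ≤ Real.log (hA.1.eigenvalues i) * 1 := mul_le_mul_of_nonpos_left hz hL
            _ = Real.log (hA.1.eigenvalues i) := mul_one _
      _ = hA.1.eigenvalues i := Real.exp_log hpos

lemma cTrPow_norm_le {A : Matrix n n ℂ} (hA : A.PosSemidef) (ht : A.trace = 1)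
    {z : ℂ} (hz : 1 ≤ z.re) : ‖cTrPow A z‖ ≤ 1 := by
  rw [cTrPow_eq hA z]
  calc ‖∑ i, (if hA.1.eigenvalues i = 0 then (0:ℂ)
        else Complex.exp ((Real.log (hA.1.eigenvalues i) : ℂ) * z))‖
      ≤ ∑ i, ‖(if hA.1.eigenvalues i = 0 then (0:ℂ)
        else Complex.exp ((Real.log (hA.1.eigenvalues i) : ℂ) * z))‖ := norm_sum_le _ _
    _ ≤ ∑ i, hA.1.eigenvalues i := Finset.sum_le_sum fun i _ => term_norm_le hA ht hz i
    _ = 1 := eig_sum_one hA ht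

lemma cTrPow_hasDerivAt {A : Matrix n n ℂ} (hA : A.PosSemidef) (z : ℂ) :
    HasDerivAt (cTrPow A)
      (∑ i, if hA.1.eigenvalues i = 0 then (0:ℂ)
        else Complex.exp ((Real.log (hA.1.eigenvalues i) : ℂ) * z)
          * (Real.log (hA.1.eigenvalues i) : ℂ)) z := by
  have heq : cTrPow A = fun w => ∑ i, (if hA.1.eigenvalues i = 0 then (0:ℂ)
      else Complex.exp ((Real.log (hA.1.eigenvalues i) : ℂ) * w)) := funext (cTrPow_eq hA)
  rw [heq]
  apply HasDerivAt.fun_sum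
  intro i _
  by_cases h : hA.1.eigenvalues i = 0
  · simpa [h] using hasDerivAt_const z (0:ℂ)
  · simp only [if_neg h]
    have h1 : HasDerivAt (fun w : ℂ => (Real.log (hA.1.eigenvalues i) : ℂ) * w)
        ((Real.log (hA.1.eigenvalues i) : ℂ)) z := by
      simpa using (hasDerivAt_id z).const_mul ((Real.log (hA.1.eigenvalues i) : ℂ))
    exact h1.cexp

lemma cTrPow_deriv_norm_le {A : Matrix n n ℂ} (hA : A.PosSemidef) (ht : A.trace = 1)
    {z : ℂ} (hz : 1 ≤ z.re) :
    ‖∑ i, if hA.1.eigenvalues i = 0 then (0:ℂ)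
      else Complex.exp ((Real.log (hA.1.eigenvalues i) : ℂ) * z)
        * (Real.log (hA.1.eigenvalues i) : ℂ)‖ ≤ (Fintype.card n : ℝ) := by
  calc ‖∑ i, if hA.1.eigenvalues i = 0 then (0:ℂ)
      else Complex.exp ((Real.log (hA.1.eigenvalues i) : ℂ) * z)
        * (Real.log (hA.1.eigenvalues i) : ℂ)‖
      ≤ ∑ i, ‖if hA.1.eigenvalues i = 0 then (0:ℂ)
      else Complex.exp ((Real.log (hA.1.eigenvalues i) : ℂ) * z)
        * (Real.log (hA.1.eigenvalues i) : ℂ)‖ := norm_sum_le _ _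
    _ ≤ ∑ _i : n, (1:ℝ) := by
        apply Finset.sum_le_sum
        intro i _
        by_cases h : hA.1.eigenvalues i = 0
        · simp [h]
        · have hpos : 0 < hA.1.eigenvalues i :=
            lt_of_le_of_ne (hA.eigenvalues_nonneg i) (Ne.symm h)
          rw [if_neg h, norm_mul]
          have h2 : ‖Complex.exp ((Real.log (hA.1.eigenvalues i) : ℂ) * z)‖
              ≤ hA.1.eigenvalues i := by
            have := term_norm_le hA ht hz i
            rwa [if_neg h] at this
          have h3 : ‖((Real.log (hA.1.eigenvalues i) : ℝ) : ℂ)‖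
              = |Real.log (hA.1.eigenvalues i)| := by
            rw [Complex.norm_real, Real.norm_eq_abs]
          rw [h3]
          have hL : Real.log (hA.1.eigenvalues i) ≤ 0 :=
            Real.log_nonpos (le_of_lt hpos) (eig_le_one hA ht i)
          rw [abs_of_nonpos hL]
          have hlog : -Real.log (hA.1.eigenvalues i) ≤ (hA.1.eigenvalues i)⁻¹ - 1 := by
            rw [← Real.log_inv]
            exact Real.log_le_sub_one_of_pos (inv_pos.2 hpos)
          calc ‖Complex.exp ((Real.log (hA.1.eigenvalues i) : ℂ) * z)‖
                * -Real.log (hA.1.eigenvalues i)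
              ≤ hA.1.eigenvalues i * ((hA.1.eigenvalues i)⁻¹ - 1) := by
                apply mul_le_mul h2 hlog (neg_nonneg.2 hL) (le_of_lt hpos)
            _ = 1 - hA.1.eigenvalues i := by field_simp
            _ ≤ 1 := by linarith [hA.eigenvalues_nonneg i]
    _ = (Fintype.card n : ℝ) := by simp


lemma exists_lim_of_approx (a : ℕ → ℝ)
    (h : ∀ ε : ℝ, 0 < ε → ∃ b : ℕ → ℝ,
      (∃ L, Filter.Tendsto b Filter.atTop (nhds L)) ∧ ∀ N, |a N - b N| ≤ ε) :
    ∃ L, Filter.Tendsto a Filter.atTop (nhds L) := by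
  have hc : CauchySeq a := by
    rw [Metric.cauchySeq_iff]
    intro ε hε
    obtain ⟨b, ⟨L, hbL⟩, hb⟩ := h (ε/4) (by linarith)
    obtain ⟨n₀, hn₀⟩ := Metric.cauchySeq_iff.1 hbL.cauchySeq (ε/4) (by linarith)
    refine ⟨n₀, fun m hm n hn => ?_⟩
    have h1 := hn₀ m hm n hn
    rw [Real.dist_eq] at h1 ⊢
    have h2 := hb m
    have h3 := hb n
    calc |a m - a n| = |(a m - b m) + (b m - b n) + (b n - a n)| := by ring_nf
      _ ≤ |a m - b m| + |b m - b n| + |b n - a n| := by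
          exact (abs_add_le _ _).trans (by gcongr; exact abs_add_le _ _)
      _ < ε := by
          have := abs_sub_comm (b n) (a n)
          linarith [abs_sub_comm (b n) (a n), h2, h3, h1]
  exact cauchySeq_tendsto_of_complete hc

lemma cont_u (x y : ℝ) (hx : 1 ≤ x) (trig : ℝ → ℝ) (htrig : Continuous trig)
    (hbd : ∀ t, |trig t| ≤ 1) :
    ContinuousOn (fun t : ℝ => if t ≤ 0 then 0 else t ^ x * trig (y * Real.log t))
      (Set.Icc 0 1) := by
  intro t ht
  rcases eq_or_lt_of_le ht.1 with h0 | h0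
  · -- t = 0
    rw [ContinuousWithinAt, ← h0]
    have hf0 : (if (0:ℝ) ≤ 0 then (0:ℝ) else (0:ℝ) ^ x * trig (y * Real.log 0)) = 0 := by simp
    rw [hf0]
    refine tendsto_of_tendsto_of_tendsto_of_le_of_le'
      (g := fun s : ℝ => -s) (h := fun s : ℝ => s) ?_ ?_ ?_ ?_
    · simpa using (continuous_neg.tendsto (0:ℝ)).mono_left nhdsWithin_le_nhds
    · exact (continuous_id.tendsto (0:ℝ)).mono_left nhdsWithin_le_nhds
    · filter_upwards [self_mem_nhdsWithin] with s hs
      by_cases hsle : s ≤ 0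
      · simp only [if_pos hsle]; linarith [hs.1]
      · simp only [if_neg hsle]
        push_neg at hsle
        have h1 : |s ^ x * trig (y * Real.log s)| ≤ s := by
          rw [abs_mul]
          calc |s ^ x| * |trig (y * Real.log s)| ≤ s ^ x * 1 := by
                apply mul_le_mul _ (hbd _) (abs_nonneg _) (Real.rpow_nonneg (le_of_lt hsle) x)
                rw [abs_of_nonneg (Real.rpow_nonneg (le_of_lt hsle) x)]
            _ = s ^ x := mul_one _
            _ ≤ s ^ (1:ℝ) := Real.rpow_le_rpow_of_exponent_ge hsle hs.2 hx
            _ = s := Real.rpow_one s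
        have := abs_le.1 h1
        linarith [this.1]
    · filter_upwards [self_mem_nhdsWithin] with s hs
      by_cases hsle : s ≤ 0
      · simp only [if_pos hsle]; linarith [hs.1]
      · simp only [if_neg hsle]
        push_neg at hsle
        have h1 : |s ^ x * trig (y * Real.log s)| ≤ s := by
          rw [abs_mul]
          calc |s ^ x| * |trig (y * Real.log s)| ≤ s ^ x * 1 := by
                apply mul_le_mul _ (hbd _) (abs_nonneg _) (Real.rpow_nonneg (le_of_lt hsle) x)
                rw [abs_of_nonneg (Real.rpow_nonneg (le_of_lt hsle) x)]
            _ = s ^ x := mul_one _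
            _ ≤ s ^ (1:ℝ) := Real.rpow_le_rpow_of_exponent_ge hsle hs.2 hx
            _ = s := Real.rpow_one s
        exact (abs_le.1 h1).2
  · -- 0 < t
    apply ContinuousAt.continuousWithinAt
    have hcong : ∀ᶠ s in nhds t, s ^ x * trig (y * Real.log s)
        = (if s ≤ 0 then 0 else s ^ x * trig (y * Real.log s)) := by
      filter_upwards [Ioi_mem_nhds h0] with s hs
      rw [if_neg (not_le.2 hs)]
    apply ContinuousAt.congr _ hcong
    apply ContinuousAt.mul
    · exact Real.continuousAt_rpow_const t x (Or.inl (ne_of_gt h0))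
    · exact (htrig.continuousAt).comp
        ((continuous_const.continuousAt).mul (Real.continuousAt_log (ne_of_gt h0)))

variable {n : Type*} [Fintype n] [DecidableEq n]

lemma re_cTrPow {A : Matrix n n ℂ} (hA : A.PosSemidef) (z : ℂ) :
    (cTrPow A z).re = ∑ i, (if hA.1.eigenvalues i ≤ 0 then 0
      else (hA.1.eigenvalues i) ^ z.re * Real.cos (z.im * Real.log (hA.1.eigenvalues i))) := by
  rw [cTrPow_eq hA z, Complex.re_sum]
  refine Finset.sum_congr rfl fun i _ => ?_
  by_cases h : hA.1.eigenvalues i = 0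
  · simp [h]
  · have hpos : 0 < hA.1.eigenvalues i := lt_of_le_of_ne (hA.eigenvalues_nonneg i) (Ne.symm h)
    rw [if_neg h, if_neg (not_le.2 hpos), Complex.exp_re]
    have h1 : ((Real.log (hA.1.eigenvalues i) : ℂ) * z).re
        = Real.log (hA.1.eigenvalues i) * z.re := by simp [Complex.mul_re]
    have h2 : ((Real.log (hA.1.eigenvalues i) : ℂ) * z).im
        = Real.log (hA.1.eigenvalues i) * z.im := by simp [Complex.mul_im]
    rw [h1, h2, Real.rpow_def_of_pos hpos, mul_comm (Real.log (hA.1.eigenvalues i)) z.im]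

lemma im_cTrPow {A : Matrix n n ℂ} (hA : A.PosSemidef) (z : ℂ) :
    (cTrPow A z).im = ∑ i, (if hA.1.eigenvalues i ≤ 0 then 0
      else (hA.1.eigenvalues i) ^ z.re * Real.sin (z.im * Real.log (hA.1.eigenvalues i))) := by
  rw [cTrPow_eq hA z, Complex.im_sum]
  refine Finset.sum_congr rfl fun i _ => ?_
  by_cases h : hA.1.eigenvalues i = 0
  · simp [h]
  · have hpos : 0 < hA.1.eigenvalues i := lt_of_le_of_ne (hA.eigenvalues_nonneg i) (Ne.symm h)
    rw [if_neg h, if_neg (not_le.2 hpos), Complex.exp_im]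
    have h1 : ((Real.log (hA.1.eigenvalues i) : ℂ) * z).re
        = Real.log (hA.1.eigenvalues i) * z.re := by simp [Complex.mul_re]
    have h2 : ((Real.log (hA.1.eigenvalues i) : ℂ) * z).im
        = Real.log (hA.1.eigenvalues i) * z.im := by simp [Complex.mul_im]
    rw [h1, h2, Real.rpow_def_of_pos hpos, mul_comm (Real.log (hA.1.eigenvalues i)) z.im]

lemma poly_trace {A : Matrix n n ℂ} (hA : A.PosSemidef) (q : Polynomial ℝ) :
    ∑ j ∈ Finset.range (q.natDegree + 1), q.coeff j * ((A ^ j).trace).re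
      = ∑ i, q.eval (hA.1.eigenvalues i) := by
  have key : ∀ j : ℕ, ((A ^ j).trace).re = ∑ i, (hA.1.eigenvalues i) ^ j := by
    intro j
    rw [herm_trace_pow hA.1 j]
    have : (∑ i, ((hA.1.eigenvalues i : ℂ)) ^ j)
        = ((∑ i, (hA.1.eigenvalues i) ^ j : ℝ) : ℂ) := by push_cast; ring
    rw [this, Complex.ofReal_re]
  calc ∑ j ∈ Finset.range (q.natDegree + 1), q.coeff j * ((A ^ j).trace).re
      = ∑ j ∈ Finset.range (q.natDegree + 1), ∑ i, q.coeff j * (hA.1.eigenvalues i) ^ j := by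
        refine Finset.sum_congr rfl fun j _ => ?_
        rw [key j, Finset.mul_sum]
    _ = ∑ i, ∑ j ∈ Finset.range (q.natDegree + 1), q.coeff j * (hA.1.eigenvalues i) ^ j :=
        Finset.sum_comm
    _ = ∑ i, q.eval (hA.1.eigenvalues i) := by
        refine Finset.sum_congr rfl fun i _ => ?_
        rw [Polynomial.eval_eq_sum_range]
lemma part_tendsto (d : ℕ) (W : ℕ → Type) [∀ N, Fintype (W N)]
    (p : (N : ℕ) → W N → ℝ) (ρ : (N : ℕ) → W N → Matrix (Fin d) (Fin d) ℂ)
    (hp : ∀ N w, 0 ≤ p N w) (hp1 : ∀ N, ∑ w, p N w = 1)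
    (hρ : ∀ N w, (ρ N w).PosSemidef) (htr : ∀ N w, (ρ N w).trace = 1)
    (hconv : ∀ f : Matrix (Fin d) (Fin d) ℂ → ℝ, Continuous f →
      ∃ L : ℝ, Filter.Tendsto (fun N => ∑ w, p N w * f (ρ N w)) Filter.atTop (nhds L))
    (z : ℂ) (hz : 1 ≤ z.re) (trig : ℝ → ℝ) (htrig : Continuous trig)
    (hbd : ∀ t, |trig t| ≤ 1) (part : ℂ → ℝ)
    (hsum : ∀ N, part (∑ w, (p N w : ℂ) * cTrPow (ρ N w) z)
      = ∑ w, p N w * part (cTrPow (ρ N w) z))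
    (hpart : ∀ A : Matrix (Fin d) (Fin d) ℂ, ∀ hA : A.PosSemidef,
      part (cTrPow A z) = ∑ i, (if hA.1.eigenvalues i ≤ 0 then 0
        else (hA.1.eigenvalues i) ^ z.re * trig (z.im * Real.log (hA.1.eigenvalues i)))) :
    ∃ L, Filter.Tendsto (fun N => part (∑ w, (p N w : ℂ) * cTrPow (ρ N w) z))
      Filter.atTop (nhds L) := by
  apply exists_lim_of_approx
  intro ε hε
  have hd1 : (0:ℝ) < (d:ℝ) + 1 := by positivity
  obtain ⟨q, hq⟩ := exists_polynomial_near_of_continuousOn 0 1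
    (fun t : ℝ => if t ≤ 0 then 0 else t ^ z.re * trig (z.im * Real.log t))
    (cont_u z.re z.im hz trig htrig hbd) (ε / ((d:ℝ) + 1)) (by positivity)
  set f : Matrix (Fin d) (Fin d) ℂ → ℝ := fun A =>
    ∑ j ∈ Finset.range (q.natDegree + 1), q.coeff j * ((A ^ j).trace).re with hfdef
  have hfcont : Continuous f := by
    refine continuous_finset_sum _ fun j _ => ?_
    exact continuous_const.mul (Complex.continuous_re.comp ((continuous_pow j).matrix_trace))
  refine ⟨fun N => ∑ w, p N w * f (ρ N w), hconv f hfcont, ?_⟩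
  intro N
  rw [hsum N, ← Finset.sum_sub_distrib]
  have hfval : ∀ N w, f (ρ N w) = ∑ i, q.eval ((hρ N w).1.eigenvalues i) := by
    intro N w
    simp only [hfdef]
    exact poly_trace (hρ N w) q
  calc |∑ w, (p N w * part (cTrPow (ρ N w) z) - p N w * f (ρ N w))|
      ≤ ∑ w, |p N w * part (cTrPow (ρ N w) z) - p N w * f (ρ N w)| :=
        Finset.abs_sum_le_sum_abs _ _
    _ ≤ ∑ w, p N w * ε := by
        refine Finset.sum_le_sum fun w _ => ?_
        rw [← mul_sub, abs_mul, abs_of_nonneg (hp N w)]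
        refine mul_le_mul_of_nonneg_left ?_ (hp N w)
        rw [hpart _ (hρ N w), hfval N w, ← Finset.sum_sub_distrib]
        calc |∑ i, ((if (hρ N w).1.eigenvalues i ≤ 0 then 0
              else ((hρ N w).1.eigenvalues i) ^ z.re
                * trig (z.im * Real.log ((hρ N w).1.eigenvalues i)))
              - q.eval ((hρ N w).1.eigenvalues i))|
            ≤ ∑ i, |((if (hρ N w).1.eigenvalues i ≤ 0 then 0
              else ((hρ N w).1.eigenvalues i) ^ z.re
                * trig (z.im * Real.log ((hρ N w).1.eigenvalues i)))
              - q.eval ((hρ N w).1.eigenvalues i))| := Finset.abs_sum_le_sum_abs _ _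
          _ ≤ ∑ _i : Fin d, ε / ((d:ℝ) + 1) := by
              refine Finset.sum_le_sum fun i _ => ?_
              rw [abs_sub_comm]
              exact le_of_lt (hq _ ⟨(hρ N w).eigenvalues_nonneg i,
                eig_le_one (hρ N w) (htr N w) i⟩)
          _ ≤ ε := by
              rw [Finset.sum_const, Finset.card_univ, Fintype.card_fin, nsmul_eq_mul]
              calc (d:ℝ) * (ε / ((d:ℝ) + 1)) ≤ ((d:ℝ)+1) * (ε / ((d:ℝ)+1)) :=
                    mul_le_mul_of_nonneg_right (by linarith) (by positivity)
                _ = ε := by field_simp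
    _ = ε := by rw [← Finset.sum_mul, hp1 N, one_mul]

set_option maxHeartbeats 1600000 in
/-- uniform convergence of Carlson-type limits: with
`g_N(z) = Σ_w p_w^{(N)} Tr(ρ_{R|w}^z)` for quantum-classical states on a fixed
finite-dimensional system `R`, each `g_N` is analytic on `Re z > 1`, continuous on
`Re z ≥ 1` and bounded by `1` there; and if the induced measures on states converge in
distribution (expectations of continuous functions of the state converge), then `g_N`
converges uniformly on compact subsets of `{Re z ≥ 1}` to a limit `g` which is continuous
on `{Re z ≥ 1}`, analytic on `{Re z > 1}`, and bounded by `1`. -/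
theorem carlson_uniform_convergence
    (d : ℕ) (W : ℕ → Type) [∀ N, Fintype (W N)]
    (p : (N : ℕ) → W N → ℝ) (ρ : (N : ℕ) → W N → Matrix (Fin d) (Fin d) ℂ)
    (hp : ∀ N w, 0 ≤ p N w) (hp1 : ∀ N, ∑ w, p N w = 1)
    (hρ : ∀ N w, (ρ N w).PosSemidef) (htr : ∀ N w, (ρ N w).trace = 1)
    (hconv : ∀ f : Matrix (Fin d) (Fin d) ℂ → ℝ, Continuous f →
      ∃ L : ℝ, Filter.Tendsto (fun N => ∑ w, p N w * f (ρ N w)) Filter.atTop (nhds L)) :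
    (∀ N, DifferentiableOn ℂ (fun z => ∑ w, (p N w : ℂ) * cTrPow (ρ N w) z) {z | 1 < z.re}
        ∧ ContinuousOn (fun z => ∑ w, (p N w : ℂ) * cTrPow (ρ N w) z) {z | 1 ≤ z.re}
        ∧ ∀ z : ℂ, 1 ≤ z.re → ‖∑ w, (p N w : ℂ) * cTrPow (ρ N w) z‖ ≤ 1)
      ∧ ∃ g : ℂ → ℂ,
          ContinuousOn g {z | 1 ≤ z.re}
          ∧ DifferentiableOn ℂ g {z | 1 < z.re}
          ∧ (∀ z : ℂ, 1 ≤ z.re → ‖g z‖ ≤ 1)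
          ∧ ∀ K : Set ℂ, K ⊆ {z | 1 ≤ z.re} → IsCompact K →
              TendstoUniformlyOn (fun N z => ∑ w, (p N w : ℂ) * cTrPow (ρ N w) z) g
                Filter.atTop K := by
  set F : ℕ → ℂ → ℂ := fun N z => ∑ w, (p N w : ℂ) * cTrPow (ρ N w) z with hF
  -- norm bound
  have hbound : ∀ N, ∀ z : ℂ, 1 ≤ z.re → ‖F N z‖ ≤ 1 := by
    intro N z hz
    calc ‖∑ w, (p N w : ℂ) * cTrPow (ρ N w) z‖
        ≤ ∑ w, ‖(p N w : ℂ) * cTrPow (ρ N w) z‖ := norm_sum_le _ _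
      _ ≤ ∑ w, p N w := by
          refine Finset.sum_le_sum fun w _ => ?_
          rw [norm_mul, Complex.norm_real, Real.norm_eq_abs, abs_of_nonneg (hp N w)]
          calc p N w * ‖cTrPow (ρ N w) z‖ ≤ p N w * 1 :=
                mul_le_mul_of_nonneg_left (cTrPow_norm_le (hρ N w) (htr N w) hz) (hp N w)
            _ = p N w := mul_one _
      _ = 1 := hp1 N
  -- derivative
  have hderiv : ∀ N, ∀ z : ℂ, HasDerivAt (F N)
      (∑ w, (p N w : ℂ) * ∑ i, if (hρ N w).1.eigenvalues i = 0 then (0:ℂ)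
        else Complex.exp ((Real.log ((hρ N w).1.eigenvalues i) : ℂ) * z)
          * (Real.log ((hρ N w).1.eigenvalues i) : ℂ)) z := by
    intro N z
    exact HasDerivAt.fun_sum fun w _ => (cTrPow_hasDerivAt (hρ N w) z).const_mul _
  have hdiff : ∀ N, Differentiable ℂ (F N) :=
    fun N z => (hderiv N z).differentiableAt
  have hDnorm : ∀ N, ∀ z : ℂ, 1 ≤ z.re →
      ‖∑ w, (p N w : ℂ) * ∑ i, if (hρ N w).1.eigenvalues i = 0 then (0:ℂ)
        else Complex.exp ((Real.log ((hρ N w).1.eigenvalues i) : ℂ) * z)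
          * (Real.log ((hρ N w).1.eigenvalues i) : ℂ)‖ ≤ (d : ℝ) := by
    intro N z hz
    calc ‖∑ w, (p N w : ℂ) * ∑ i, if (hρ N w).1.eigenvalues i = 0 then (0:ℂ)
        else Complex.exp ((Real.log ((hρ N w).1.eigenvalues i) : ℂ) * z)
          * (Real.log ((hρ N w).1.eigenvalues i) : ℂ)‖
        ≤ ∑ w, ‖(p N w : ℂ) * ∑ i, if (hρ N w).1.eigenvalues i = 0 then (0:ℂ)
        else Complex.exp ((Real.log ((hρ N w).1.eigenvalues i) : ℂ) * z)
          * (Real.log ((hρ N w).1.eigenvalues i) : ℂ)‖ := norm_sum_le _ _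
      _ ≤ ∑ w, p N w * (d : ℝ) := by
          refine Finset.sum_le_sum fun w _ => ?_
          rw [norm_mul, Complex.norm_real, Real.norm_eq_abs, abs_of_nonneg (hp N w)]
          refine mul_le_mul_of_nonneg_left ?_ (hp N w)
          simpa [Fintype.card_fin] using cTrPow_deriv_norm_le (hρ N w) (htr N w) hz
      _ = (d : ℝ) := by rw [← Finset.sum_mul, hp1 N, one_mul]
  -- Lipschitz on the closed half-plane
  have hlip : ∀ N, ∀ z ∈ {z : ℂ | 1 ≤ z.re}, ∀ z' ∈ {z : ℂ | 1 ≤ z.re},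
      ‖F N z' - F N z‖ ≤ (d : ℝ) * ‖z' - z‖ := by
    intro N z hz z' hz'
    refine (convex_halfSpace_re_ge 1).norm_image_sub_le_of_norm_hasFDerivWithin_le
      (f' := fun z => ContinuousLinearMap.smulRight (1 : ℂ →L[ℂ] ℂ)
        (∑ w, (p N w : ℂ) * ∑ i, if (hρ N w).1.eigenvalues i = 0 then (0:ℂ)
          else Complex.exp ((Real.log ((hρ N w).1.eigenvalues i) : ℂ) * z)
            * (Real.log ((hρ N w).1.eigenvalues i) : ℂ)))
      (fun x _ => ((hderiv N x).hasFDerivAt).hasFDerivWithinAt) ?_ hz hz'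
    intro x hx
    simpa only [ContinuousLinearMap.norm_smulRight_apply, norm_one, one_mul] using
      hDnorm N x hx
  -- pointwise convergence
  have hptre : ∀ z : ℂ, 1 ≤ z.re →
      (∃ Lr, Filter.Tendsto (fun N => (F N z).re) Filter.atTop (nhds Lr))
      ∧ (∃ Li, Filter.Tendsto (fun N => (F N z).im) Filter.atTop (nhds Li)) := by
    intro z hz
    constructor
    · exact part_tendsto d W p ρ hp hp1 hρ htr hconv z hz Real.cos Real.continuous_cos
        (fun t => Real.abs_cos_le_one t) Complex.re
        (fun N => by simp only [Complex.re_sum, Complex.re_ofReal_mul])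
        (fun A hA => re_cTrPow hA z)
    · exact part_tendsto d W p ρ hp hp1 hρ htr hconv z hz Real.sin Real.continuous_sin
        (fun t => Real.abs_sin_le_one t) Complex.im
        (fun N => by simp only [Complex.im_sum, Complex.im_ofReal_mul])
        (fun A hA => im_cTrPow hA z)
  have hptwise : ∀ z : ℂ, 1 ≤ z.re →
      ∃ L, Filter.Tendsto (fun N => F N z) Filter.atTop (nhds L) := by
    intro z hz
    obtain ⟨⟨Lr, hLr⟩, ⟨Li, hLi⟩⟩ := hptre z hz
    refine ⟨(Lr : ℂ) + (Li : ℂ) * Complex.I, ?_⟩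
    have h1 : Filter.Tendsto (fun N => ((F N z).re : ℂ) + ((F N z).im : ℂ) * Complex.I)
        Filter.atTop (nhds ((Lr : ℂ) + (Li : ℂ) * Complex.I)) := by
      exact ((Complex.continuous_ofReal.tendsto Lr).comp hLr).add
        (((Complex.continuous_ofReal.tendsto Li).comp hLi).mul_const Complex.I)
    simpa only [Complex.re_add_im] using h1
  -- the limit function
  have hgdef : ∀ z : ℂ, ∃ L : ℂ, 1 ≤ z.re →
      Filter.Tendsto (fun N => F N z) Filter.atTop (nhds L) := by
    intro z
    by_cases hz : 1 ≤ z.re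
    · obtain ⟨L, hL⟩ := hptwise z hz
      exact ⟨L, fun _ => hL⟩
    · exact ⟨0, fun h => absurd h hz⟩
  choose g hg using hgdef
  have tendsto_g : ∀ z : ℂ, 1 ≤ z.re →
      Filter.Tendsto (fun N => F N z) Filter.atTop (nhds (g z)) := fun z hz => hg z hz
  -- g is Lipschitz on the closed half-plane
  have glip : ∀ z ∈ {z : ℂ | 1 ≤ z.re}, ∀ z' ∈ {z : ℂ | 1 ≤ z.re},
      ‖g z' - g z‖ ≤ (d : ℝ) * ‖z' - z‖ := by
    intro z hz z' hz'
    have h1 : Filter.Tendsto (fun N => ‖F N z' - F N z‖) Filter.atTop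
        (nhds ‖g z' - g z‖) := ((tendsto_g z' hz').sub (tendsto_g z hz)).norm
    exact le_of_tendsto h1 (Filter.Eventually.of_forall fun N => hlip N z hz z' hz')
  have gbound : ∀ z : ℂ, 1 ≤ z.re → ‖g z‖ ≤ 1 := by
    intro z hz
    exact le_of_tendsto (tendsto_g z hz).norm
      (Filter.Eventually.of_forall fun N => hbound N z hz)
  have gcont : ContinuousOn g {z : ℂ | 1 ≤ z.re} := by
    have : LipschitzOnWith (Real.toNNReal (d : ℝ)) g {z : ℂ | 1 ≤ z.re} := by
      apply LipschitzOnWith.of_dist_le_mul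
      intro x hx y hy
      rw [dist_eq_norm, dist_eq_norm]
      calc ‖g x - g y‖ ≤ (d : ℝ) * ‖x - y‖ := glip y hy x hx
        _ = Real.toNNReal (d : ℝ) * ‖x - y‖ := by
            rw [Real.coe_toNNReal _ (by positivity)]
    exact this.continuousOn
  -- uniform convergence on compacts
  have hunif : ∀ K : Set ℂ, K ⊆ {z : ℂ | 1 ≤ z.re} → IsCompact K →
      TendstoUniformlyOn F g Filter.atTop K := by
    intro K hKS hK
    rw [Metric.tendstoUniformlyOn_iff]
    intro ε hε
    have hd1 : (0:ℝ) < (d:ℝ) + 1 := by positivity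
    set δ : ℝ := ε / (4 * ((d:ℝ) + 1)) with hδ
    have hδpos : 0 < δ := by positivity
    obtain ⟨t, htK, hcover⟩ := hK.elim_nhds_subcover (fun z => Metric.ball z δ)
      (fun z _ => Metric.ball_mem_nhds z hδpos)
    have hev : ∀ᶠ N in Filter.atTop, ∀ x ∈ t, dist (g x) (F N x) < ε / 4 := by
      rw [Filter.eventually_all_finset]
      intro x hx
      have hxS : (1:ℝ) ≤ x.re := hKS (htK x hx)
      have h1 := Metric.tendsto_nhds.mp (tendsto_g x hxS) (ε / 4) (by linarith)
      filter_upwards [h1] with N hN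
      rw [dist_comm]
      exact hN
    filter_upwards [hev] with N hN
    intro x hxK
    obtain ⟨y, hyt, hxy⟩ := Set.mem_iUnion₂.1 (hcover hxK)
    have hyK : y ∈ K := htK y hyt
    have hxS : x ∈ {z : ℂ | 1 ≤ z.re} := hKS hxK
    have hyS : y ∈ {z : ℂ | 1 ≤ z.re} := hKS hyK
    have hd1' : dist (g x) (g y) ≤ ε / 4 := by
      rw [dist_eq_norm]
      calc ‖g x - g y‖ ≤ (d : ℝ) * ‖x - y‖ := glip y hyS x hxS
        _ ≤ ((d:ℝ) + 1) * δ := by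
            apply mul_le_mul (by linarith) _ (norm_nonneg _) (by linarith)
            rw [← dist_eq_norm]
            exact le_of_lt (Metric.mem_ball.1 hxy)
        _ = ε / 4 := by rw [hδ]; field_simp
    have hd2' : dist (g y) (F N y) < ε / 4 := hN y hyt
    have hd3' : dist (F N y) (F N x) ≤ ε / 4 := by
      rw [dist_eq_norm]
      calc ‖F N y - F N x‖ ≤ (d : ℝ) * ‖y - x‖ := hlip N x hxS y hyS
        _ ≤ ((d:ℝ) + 1) * δ := by
            apply mul_le_mul (by linarith) _ (norm_nonneg _) (by linarith)
            rw [← dist_eq_norm, dist_comm]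
            exact le_of_lt (Metric.mem_ball.1 hxy)
        _ = ε / 4 := by rw [hδ]; field_simp
    calc dist (g x) (F N x)
        ≤ dist (g x) (g y) + dist (g y) (F N y) + dist (F N y) (F N x) := dist_triangle4 _ _ _ _
      _ < ε / 4 + ε / 4 + ε / 4 := by
          apply add_lt_add_of_lt_of_le _ hd3'
          exact add_lt_add_of_le_of_lt hd1' hd2'
      _ < ε := by linarith
  -- differentiability of the limit
  have hU : IsOpen {z : ℂ | 1 < z.re} := isOpen_lt continuous_const Complex.continuous_re
  have hUS : {z : ℂ | 1 < z.re} ⊆ {z : ℂ | 1 ≤ z.re} := fun z hz => le_of_lt (Set.mem_setOf.1 hz)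
  have gdiff : DifferentiableOn ℂ g {z : ℂ | 1 < z.re} := by
    have hTLU : TendstoLocallyUniformlyOn F g Filter.atTop {z : ℂ | 1 < z.re} := by
      rw [tendstoLocallyUniformlyOn_iff_forall_isCompact hU]
      intro K hKU hK
      exact hunif K (hKU.trans hUS) hK
    exact hTLU.differentiableOn
      (Filter.Eventually.of_forall fun N => (hdiff N).differentiableOn) hU
  exact ⟨fun N => ⟨((hdiff N).differentiableOn), (hdiff N).continuous.continuousOn,
    fun z hz => hbound N z hz⟩, g, gcont, gdiff, gbound, hunif⟩
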